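/- Let P be a finite partial order and let A, B be two distinct maximal antichains of P. Then B covers A in (MA(P), ⊑) if and only if for every x ∈ A \ B and every y ∈ B \ A, y covers x in P (i.e., x ⋖_P y). -/

import Mathlib

/-- A maximal antichain of a partial order: an antichain (w.r.t. `≤`) not properly
contained in any other antichain. -/
def MaxAntichain {α : Type*} [PartialOrder α] (A : Set α) : Prop :=
  IsAntichain (· ≤ ·) A ∧ ∀ B : Set α, IsAntichain (· ≤ ·) B → A ⊆ B → A = B

/-- The order `A ⊑ B` on maximal antichains: every element of `A` is below
some element of `B`. -/
def MARel {α : Type*} [PartialOrder α] (A B : Set α) : Prop :=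
  ∀ a ∈ A, ∃ b ∈ B, a ≤ b

/-- `B` covers `A` in `(MA(P), ⊑)`: `A ⊑ B`, `A ≠ B`, and no maximal antichain
distinct from both lies between them. -/
def MACovers {α : Type*} [PartialOrder α] (A B : Set α) : Prop :=
  MARel A B ∧ A ≠ B ∧
    ¬ ∃ C : Set α, MaxAntichain C ∧ C ≠ A ∧ C ≠ B ∧ MARel A C ∧ MARel C B

/-- Every element is comparable to some element of a maximal antichain. -/
lemma maxAntichain_comp {α : Type*} [PartialOrder α] {B : Set α} (hB : MaxAntichain B)
    (x : α) : ∃ b ∈ B, x ≤ b ∨ b ≤ x := by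
  by_contra h
  push_neg at h
  have hxB : x ∉ B := fun hx => (h x hx).1 le_rfl
  have hanti : IsAntichain (· ≤ ·) (insert x B) := by
    refine hB.1.insert (fun b hb hne => ?_) (fun b hb hne => ?_)
    · exact (h b hb).2
    · exact (h b hb).1
  have := hB.2 (insert x B) hanti (Set.subset_insert x B)
  exact hxB (this ▸ Set.mem_insert x B)

/-- Any antichain contained in a set `D` extends to an antichain in `D` that is
maximal among antichains in `D`. -/
lemma antichain_extend {α : Type*} [PartialOrder α] {D S : Set α}
    (hS : IsAntichain (· ≤ ·) S) (hSD : S ⊆ D) :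
    ∃ M, IsAntichain (· ≤ ·) M ∧ S ⊆ M ∧ M ⊆ D ∧
      ∀ z ∈ D, z ∉ M → ∃ m ∈ M, m ≤ z ∨ z ≤ m := by
  have hchainub : ∀ c ⊆ {T | IsAntichain (· ≤ ·) T ∧ S ⊆ T ∧ T ⊆ D},
      IsChain (· ⊆ ·) c → c.Nonempty →
      ∃ ub ∈ {T | IsAntichain (· ≤ ·) T ∧ S ⊆ T ∧ T ⊆ D}, ∀ s ∈ c, s ⊆ ub := by
    intro c hcsub hchain hcne
    refine ⟨⋃₀ c, ⟨?_, ?_, ?_⟩, fun s hs => Set.subset_sUnion_of_mem hs⟩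
    · intro p hp q hq hpq
      obtain ⟨T₁, hT₁, hpT₁⟩ := hp
      obtain ⟨T₂, hT₂, hqT₂⟩ := hq
      rcases eq_or_ne T₁ T₂ with rfl | hT
      · exact (hcsub hT₁).1 hpT₁ hqT₂ hpq
      · rcases hchain hT₁ hT₂ hT with h12 | h21
        · exact (hcsub hT₂).1 (h12 hpT₁) hqT₂ hpq
        · exact (hcsub hT₁).1 hpT₁ (h21 hqT₂) hpq
    · obtain ⟨T, hT⟩ := hcne
      exact (hcsub hT).2.1.trans (Set.subset_sUnion_of_mem hT)
    · exact Set.sUnion_subset fun T hT => (hcsub hT).2.2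
  obtain ⟨M, hSM, hMmem, hMmax⟩ :=
    zorn_subset_nonempty {T | IsAntichain (· ≤ ·) T ∧ S ⊆ T ∧ T ⊆ D} hchainub S ⟨hS, subset_rfl, hSD⟩
  · refine ⟨M, hMmem.1, hSM, hMmem.2.2, fun z hz hzM => ?_⟩
    by_contra h
    push_neg at h
    have hanti : IsAntichain (· ≤ ·) (insert z M) := by
      refine hMmem.1.insert (fun m hm hne => ?_) (fun m hm hne => ?_)
      · intro hle; exact (h m hm).1 hle
      · intro hle; exact (h m hm).2 hle
    have hmem : insert z M ∈ {T | IsAntichain (· ≤ ·) T ∧ S ⊆ T ∧ T ⊆ D} :=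
      ⟨hanti, hSM.trans (Set.subset_insert z M), Set.insert_subset hz hMmem.2.2⟩
    have := hMmax hmem (Set.subset_insert z M)
    exact hzM (this (Set.mem_insert z M))

/-- Key construction: given maximal antichains `A ⊑ B` and an element `w` below `B`
that is not strictly above any element of `A` it isn't strictly above (suitably
incomparable with the part of `A` not strictly below it), there is a maximal
antichain `C` with `A ⊑ C ⊑ B`, containing `w` and all of `A` not strictly below `w`. -/
lemma between_exists {α : Type*} [PartialOrder α] {A B : Set α}
    (hA : MaxAntichain A) (hB : MaxAntichain B) (hAB : MARel A B) {w : α}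
    (hwD : ∃ b ∈ B, w ≤ b) (hwA : ∀ a ∈ A, ¬ a < w → ¬ w ≤ a) :
    ∃ C : Set α, MaxAntichain C ∧ MARel A C ∧ MARel C B ∧ w ∈ C ∧
      ∀ a ∈ A, ¬ a < w → a ∈ C := by
  set D : Set α := {z | ∃ b ∈ B, z ≤ b} with hD
  set S : Set α := {a | a ∈ A ∧ ¬ a < w} ∪ {w} with hSdef
  have hwS : w ∈ S := Or.inr rfl
  have hS : IsAntichain (· ≤ ·) S := by
    rintro p (⟨hpA, hpw⟩ | hp) q (⟨hqA, hqw⟩ | hq) hpq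
    · exact hA.1 hpA hqA hpq
    · simp only [Set.mem_singleton_iff] at hq; subst hq
      intro hle
      rcases lt_or_eq_of_le hle with h | h
      · exact hpw h
      · exact hpq h
    · simp only [Set.mem_singleton_iff] at hp; subst hp
      exact hwA q hqA hqw
    · simp only [Set.mem_singleton_iff] at hp hq; exact absurd (hp.trans hq.symm) hpq
  have hSD : S ⊆ D := by
    rintro p (⟨hpA, _⟩ | hp)
    · exact hAB p hpA
    · simp only [Set.mem_singleton_iff] at hp; subst hp; exact hwD
  obtain ⟨M, hManti, hSM, hMD, hMmax⟩ := antichain_extend hS hSD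
  have hMcomp : ∀ z ∈ D, ∃ m ∈ M, m ≤ z ∨ z ≤ m := by
    intro z hz
    by_cases hzM : z ∈ M
    · exact ⟨z, hzM, Or.inl le_rfl⟩
    · exact hMmax z hz hzM
  have hMmaxA : MaxAntichain M := by
    refine ⟨hManti, fun E hE hME => ?_⟩
    refine Set.Subset.antisymm hME fun e he => ?_
    by_contra heM
    have hinc : ∀ m ∈ M, ¬ m ≤ e ∧ ¬ e ≤ m := by
      intro m hm
      have hme : m ≠ e := fun h => heM (h ▸ hm)
      exact ⟨hE (hME hm) he hme, hE he (hME hm) hme.symm⟩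
    have heD : e ∉ D := by
      intro heD
      obtain ⟨m, hm, hcomp⟩ := hMcomp e heD
      rcases hcomp with h | h
      · exact (hinc m hm).1 h
      · exact (hinc m hm).2 h
    obtain ⟨b, hb, hcomp⟩ := maxAntichain_comp hB e
    have hbD : b ∈ D := ⟨b, hb, le_rfl⟩
    rcases hcomp with h | h
    · exact heD ⟨b, hb, h⟩
    · -- b ≤ e, b ≠ e
      have hbe : b ≠ e := fun hbe => heD (hbe ▸ hbD)
      obtain ⟨m, hm, hcomp'⟩ := hMcomp b hbD
      rcases hcomp' with h' | h'
      · exact (hinc m hm).1 (h'.trans h)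
      · -- b ≤ m, m ∈ M ⊆ D so m ≤ b' ∈ B; B antichain forces m = b
        obtain ⟨b', hb', hmb'⟩ := hMD hm
        have hbb' : b ≤ b' := h'.trans hmb'
        have : b = b' := by
          by_contra hne
          exact hB.1 hb hb' hne hbb'
        subst this
        have hmb : m = b := le_antisymm hmb' h'
        subst hmb
        exact (hinc m hm).1 h
  refine ⟨M, hMmaxA, ?_, ?_, hSM hwS, fun a ha haw => hSM (Or.inl ⟨ha, haw⟩)⟩
  · intro a ha
    by_cases haw : a < w
    · exact ⟨w, hSM hwS, le_of_lt haw⟩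
    · exact ⟨a, hSM (Or.inl ⟨ha, haw⟩), le_rfl⟩
  · intro m hm
    exact hMD hm

theorem stmt4 {α : Type*} [Fintype α] [PartialOrder α] (A B : Set α)
    (hA : MaxAntichain A) (hB : MaxAntichain B) (hne : A ≠ B) :
    MACovers A B ↔ ∀ x ∈ A \ B, ∀ y ∈ B \ A, x ⋖ y := by
  constructor
  · rintro ⟨hAB, -, hno⟩ x hx y hy
    refine ⟨?_, fun z hxz hzy => ?_⟩
    · -- x < y
      by_contra hxy
      have hwA : ∀ a ∈ A, ¬ a < y → ¬ y ≤ a := by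
        intro a ha haw hya
        obtain ⟨b, hb, hab⟩ := hAB a ha
        have hyb : y ≤ b := hya.trans hab
        have : y = b := by
          by_contra hne'
          exact hB.1 hy.1 hb hne' hyb
        subst this
        have : a = y := le_antisymm hab hya
        exact hy.2 (this ▸ ha)
      obtain ⟨C, hC, hACrel, hCBrel, hyC, hAinC⟩ :=
        between_exists hA hB hAB ⟨y, hy.1, le_rfl⟩ hwA
      refine hno ⟨C, hC, ?_, ?_, hACrel, hCBrel⟩
      · intro h; exact hy.2 (h ▸ hyC)
      · intro h; exact hx.2 (h ▸ hAinC x hx.1 hxy)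
    · -- no z strictly between x and y
      have hwA : ∀ a ∈ A, ¬ a < z → ¬ z ≤ a := by
        intro a ha haw hza
        have hxa : x < a := hxz.trans_le hza
        exact hA.1 hx.1 ha hxa.ne hxa.le
      obtain ⟨C, hC, hACrel, hCBrel, hzC, -⟩ :=
        between_exists hA hB hAB ⟨y, hy.1, hzy.le⟩ hwA
      refine hno ⟨C, hC, ?_, ?_, hACrel, hCBrel⟩
      · intro h
        have hzA : z ∈ A := h ▸ hzC
        exact hA.1 hx.1 hzA hxz.ne hxz.le
      · intro h
        have hzB : z ∈ B := h ▸ hzC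
        exact hB.1 hzB hy.1 hzy.ne hzy.le
  · intro H
    have hAB : MARel A B := by
      intro a ha
      by_cases haB : a ∈ B
      · exact ⟨a, haB, le_rfl⟩
      · obtain ⟨b, hb, hcomp⟩ := maxAntichain_comp hB a
        rcases hcomp with h | h
        · exact ⟨b, hb, h⟩
        · have hba : b ≠ a := fun h' => haB (h' ▸ hb)
          have hbA : b ∉ A := by
            intro hbA
            exact hA.1 hbA ha hba h
          have := H a ⟨ha, haB⟩ b ⟨hb, hbA⟩
          exact absurd h (not_le_of_gt this.1)
    refine ⟨hAB, hne, ?_⟩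
    rintro ⟨C, hC, hCA, hCB, hAC, hCB2⟩
    have hCsub : C ⊆ A ∪ B := by
      intro c hc
      by_contra hc2
      rw [Set.mem_union] at hc2
      push_neg at hc2
      obtain ⟨hcA, hcB⟩ := hc2
      obtain ⟨b, hb, hcb⟩ := hCB2 c hc
      obtain ⟨a, ha, hcomp⟩ := maxAntichain_comp hA c
      rcases hcomp with h | h
      · -- c ≤ a : then a ≤ c' ∈ C gives two comparable elements of C
        obtain ⟨c', hc', hac'⟩ := hAC a ha
        have hcc' : c ≤ c' := h.trans hac'
        have hne' : c ≠ c' := by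
          rintro rfl
          exact hcA (le_antisymm h (hac'.trans (le_of_eq rfl)) ▸ ha)
        exact hC.1 hc hc' hne' hcc'
      · -- a ≤ c < b with a < c
        have hac : a < c := lt_of_le_of_ne h (fun h' => hcA (h' ▸ ha))
        have hcb' : c < b := lt_of_le_of_ne hcb (fun h' => hcB (h' ▸ hb))
        have haB : a ∉ B := by
          intro haB
          have hab : a < b := hac.trans hcb'
          exact hB.1 haB hb hab.ne hab.le
        have hbA : b ∉ A := by
          intro hbA
          have hab : a < b := hac.trans hcb'
          exact hA.1 ha hbA hab.ne hab.le
        exact (H a ⟨ha, haB⟩ b ⟨hb, hbA⟩).2 hac hcb'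
    by_cases hCBA : ∃ c ∈ C, c ∈ B \ A
    · -- then C ⊆ B
      obtain ⟨c₂, hc₂C, hc₂⟩ := hCBA
      have hCsubB : C ⊆ B := by
        intro c hc
        rcases hCsub hc with hcA | hcB
        · by_cases hcB : c ∈ B
          · exact hcB
          · have hcov := H c ⟨hcA, hcB⟩ c₂ hc₂
            have hnec : c ≠ c₂ := fun h => hcB (h ▸ hc₂.1)
            exact absurd hcov.1.le (hC.1 hc hc₂C hnec)
        · exact hcB
      exact hCB (hC.2 B hB.1 hCsubB)
    · push_neg at hCBA
      have hCsubA : C ⊆ A := by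
        intro c hc
        rcases hCsub hc with hcA | hcB
        · exact hcA
        · by_contra hcA
          exact hCBA c hc ⟨hcB, hcA⟩
      exact hCA (hC.2 A hA.1 hCsubA)
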